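/- arXiv:1408.5099 — 5 statements merged into one kernel-verified Lean document; each statement's English description precedes it below -/
import Mathlib

section
/- Let A be a real n×d matrix with rows a_1,…,a_n, let B be a real k×d matrix, and let λ ≥ 1. Suppose (1/λ)·AᵀA ⪯ BᵀB ⪯ AᵀA in the Loewner order. Then for every i, the generalized leverage score satisfies τ_i(A) ≤ τ_i^B(A) ≤ λ·τ_i(A); in particular τ_i^B(A) is finite. -/
open Matrix
open scoped ENNReal RealInnerProductSpace

/-- The leverage score of row `i` of `A`:
`τᵢ(A) = inf {‖x‖₂² : Aᵀx = aᵢ}` (the set is nonempty since `x = eᵢ` works). -/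
noncomputable def lev {n d : ℕ} (A : Matrix (Fin n) (Fin d) ℝ) (i : Fin n) : ℝ :=
  sInf {t : ℝ | ∃ x : Fin n → ℝ, Aᵀ *ᵥ x = A i ∧ t = ∑ j, (x j) ^ 2}

/-- The generalized leverage score of a row `a` with respect to `B`:
`τ^B(a) = inf {‖x‖₂² : Bᵀx = a} ∈ [0,∞]`, with `inf ∅ = ∞`. -/
noncomputable def glev {k d : ℕ} (B : Matrix (Fin k) (Fin d) ℝ) (a : Fin d → ℝ) : ℝ≥0∞ :=
  sInf {t : ℝ≥0∞ | ∃ x : Fin k → ℝ, Bᵀ *ᵥ x = a ∧ t = ENNReal.ofReal (∑ j, (x j) ^ 2)}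

/-- `vᵀ (MᵀM) v = ‖Mv‖²`. -/
lemma dot_transpose_mul_self {p q : ℕ} (M : Matrix (Fin p) (Fin q) ℝ) (v : Fin q → ℝ) :
    v ⬝ᵥ ((Mᵀ * M) *ᵥ v) = ∑ j, ((M *ᵥ v) j) ^ 2 := by
  rw [← mulVec_mulVec, Matrix.dotProduct_mulVec, vecMul_transpose]
  simp [dotProduct, pow_two]

/-- A symmetric real matrix maps onto everything orthogonal to its kernel. -/
lemma exists_mulVec_eq {d : ℕ} (M : Matrix (Fin d) (Fin d) ℝ) (hM : Mᵀ = M)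
    (a : Fin d → ℝ) (h : ∀ v : Fin d → ℝ, M *ᵥ v = 0 → a ⬝ᵥ v = 0) :
    ∃ w : Fin d → ℝ, M *ᵥ w = a := by
  classical
  set T : EuclideanSpace ℝ (Fin d) →ₗ[ℝ] EuclideanSpace ℝ (Fin d) :=
    Matrix.toEuclideanLin M with hT
  have hMH : Mᴴ = M := by
    ext i j
    simpa [Matrix.conjTranspose_apply] using congrFun (congrFun hM i) j
  have hadj : LinearMap.adjoint T = T := by
    rw [hT, ← Matrix.toEuclideanLin_conjTranspose_eq_adjoint, hMH]
  have hle : LinearMap.range T ≤ (LinearMap.ker T)ᗮ := by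
    rintro x ⟨w, rfl⟩
    rw [Submodule.mem_orthogonal]
    intro v hv
    have h1 : ⟪LinearMap.adjoint T v, w⟫ = ⟪v, T w⟫ := T.adjoint_inner_left w v
    rw [hadj, LinearMap.mem_ker.mp hv] at h1
    simpa using h1.symm
  have heq : LinearMap.range T = (LinearMap.ker T)ᗮ := by
    apply Submodule.eq_of_le_of_finrank_le hle
    have h1 := Submodule.finrank_add_finrank_orthogonal (K := LinearMap.ker T)
    have h2 := LinearMap.finrank_range_add_finrank_ker T
    omega
  have ha : (WithLp.equiv 2 (Fin d → ℝ)).symm a ∈ (LinearMap.ker T)ᗮ := by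
    rw [Submodule.mem_orthogonal]
    intro v hv
    have hv' : M *ᵥ (WithLp.equiv 2 (Fin d → ℝ) v) = 0 := by
      have := LinearMap.mem_ker.mp hv
      simpa [hT, Matrix.toEuclideanLin_apply] using
        congrArg (WithLp.equiv 2 (Fin d → ℝ)) this
    have := h _ hv'
    simpa [PiLp.inner_apply, dotProduct, mul_comm] using this
  rw [← heq] at ha
  obtain ⟨w, hw⟩ := ha
  refine ⟨WithLp.equiv 2 (Fin d → ℝ) w, ?_⟩
  simpa [hT, Matrix.toEuclideanLin_apply] using
    congrArg (WithLp.equiv 2 (Fin d → ℝ)) hw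

/-- if `(1/λ)·AᵀA ⪯ BᵀB ⪯ AᵀA` with `λ ≥ 1`, then
`τᵢ(A) ≤ τᵢ^B(A) ≤ λ·τᵢ(A)`; in particular `τᵢ^B(A)` is finite. -/
theorem stmt3 {n d k : ℕ} (A : Matrix (Fin n) (Fin d) ℝ) (B : Matrix (Fin k) (Fin d) ℝ)
    (lam : ℝ) (hlam : 1 ≤ lam)
    (hlow : (Bᵀ * B - lam⁻¹ • (Aᵀ * A)).PosSemidef)
    (hup : (Aᵀ * A - Bᵀ * B).PosSemidef) (i : Fin n) :
    ENNReal.ofReal (lev A i) ≤ glev B (A i) ∧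
    glev B (A i) ≤ ENNReal.ofReal (lam * lev A i) ∧
    glev B (A i) ≠ ∞ := by
  classical
  have hlam0 : (0:ℝ) < lam := lt_of_lt_of_le one_pos hlam
  set a : Fin d → ℝ := A i with ha
  -- quadratic form comparisons
  have hup' : ∀ v : Fin d → ℝ, ∑ j, ((B *ᵥ v) j) ^ 2 ≤ ∑ j, ((A *ᵥ v) j) ^ 2 := by
    intro v
    have h0 := hup.dotProduct_mulVec_nonneg v
    simp only [star_trivial, sub_mulVec, dotProduct_sub] at h0
    rw [dot_transpose_mul_self, dot_transpose_mul_self] at h0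
    linarith
  have hlow' : ∀ v : Fin d → ℝ, ∑ j, ((A *ᵥ v) j) ^ 2 ≤ lam * ∑ j, ((B *ᵥ v) j) ^ 2 := by
    intro v
    have h0 := hlow.dotProduct_mulVec_nonneg v
    simp only [star_trivial, sub_mulVec, dotProduct_sub, smul_mulVec,
      dotProduct_smul, smul_eq_mul] at h0
    rw [dot_transpose_mul_self, dot_transpose_mul_self] at h0
    have := (mul_le_mul_iff_right₀ hlam0).mpr (sub_nonneg.mp h0)
    calc ∑ j, ((A *ᵥ v) j) ^ 2 = lam * (lam⁻¹ * ∑ j, ((A *ᵥ v) j) ^ 2) := by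
          field_simp
      _ ≤ lam * ∑ j, ((B *ᵥ v) j) ^ 2 := by
          apply mul_le_mul_of_nonneg_left _ hlam0.le
          linarith
  -- kernel facts
  have hkerA : ∀ v : Fin d → ℝ, A *ᵥ v = 0 → a ⬝ᵥ v = 0 := by
    intro v hv
    have : (A *ᵥ v) i = 0 := by rw [hv]; rfl
    simpa [ha, mulVec, dotProduct] using this
  have hsq_zero : ∀ {p : ℕ} (y : Fin p → ℝ), (∑ j, (y j) ^ 2) ≤ 0 → y = 0 := by
    intro p y hy
    funext j
    have h1 : ∑ j, (y j) ^ 2 = 0 :=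
      le_antisymm hy (Finset.sum_nonneg fun j _ => sq_nonneg _)
    have := (Finset.sum_eq_zero_iff_of_nonneg (fun j _ => sq_nonneg (y j))).mp h1
      j (Finset.mem_univ j)
    exact (pow_eq_zero_iff two_ne_zero).mp this
  -- existence of u with AᵀA u = a
  obtain ⟨u, hu⟩ : ∃ u : Fin d → ℝ, (Aᵀ * A) *ᵥ u = a := by
    apply exists_mulVec_eq
    · rw [Matrix.transpose_mul, Matrix.transpose_transpose]
    · intro v hv
      have hAv : A *ᵥ v = 0 := by
        apply hsq_zero
        rw [← dot_transpose_mul_self, hv, dotProduct_zero]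
      exact hkerA v hAv
  -- existence of w with BᵀB w = a
  obtain ⟨w, hw⟩ : ∃ w : Fin d → ℝ, (Bᵀ * B) *ᵥ w = a := by
    apply exists_mulVec_eq
    · rw [Matrix.transpose_mul, Matrix.transpose_transpose]
    · intro v hv
      have hBv : ∑ j, ((B *ᵥ v) j) ^ 2 = 0 := by
        rw [← dot_transpose_mul_self, hv, dotProduct_zero]
      have hAv : A *ᵥ v = 0 := by
        apply hsq_zero
        calc ∑ j, ((A *ᵥ v) j) ^ 2 ≤ lam * ∑ j, ((B *ᵥ v) j) ^ 2 := hlow' v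
          _ = 0 := by rw [hBv, mul_zero]
      exact hkerA v hAv
  -- basic dot product identities
  have hAu_sq : ∑ j, ((A *ᵥ u) j) ^ 2 = u ⬝ᵥ a := by
    rw [← hu, dot_transpose_mul_self]
  have hBw_sq : ∑ j, ((B *ᵥ w) j) ^ 2 = w ⬝ᵥ a := by
    rw [← hw, dot_transpose_mul_self]
  have hwa_nonneg : 0 ≤ w ⬝ᵥ a := by
    rw [← hBw_sq]; exact Finset.sum_nonneg fun j _ => sq_nonneg _
  -- the lev set
  set S : Set ℝ := {t : ℝ | ∃ x : Fin n → ℝ, Aᵀ *ᵥ x = A i ∧ t = ∑ j, (x j) ^ 2} with hS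
  have hSne : S.Nonempty := by
    refine ⟨∑ j, ((Pi.single i 1 : Fin n → ℝ) j) ^ 2, Pi.single i 1, ?_, rfl⟩
    funext j
    simp [mulVec, dotProduct, Pi.single_apply]
  -- lev A i ≤ u ⬝ᵥ a  (feasibility of A *ᵥ u)
  have hfeas_u : Aᵀ *ᵥ (A *ᵥ u) = A i := by
    rw [mulVec_mulVec, hu, ha]
  have hbdd : BddBelow S := by
    refine ⟨0, fun t ht => ?_⟩
    obtain ⟨x, -, rfl⟩ := ht
    exact Finset.sum_nonneg fun j _ => sq_nonneg _
  have hlevS : lev A i = sInf S := rfl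
  have hlev_le : lev A i ≤ u ⬝ᵥ a := by
    rw [← hAu_sq, hlevS]
    exact csInf_le hbdd ⟨A *ᵥ u, hfeas_u, rfl⟩
  -- lev A i ≥ λ⁻¹ (w ⬝ᵥ a)
  have hlev_ge : lam⁻¹ * (w ⬝ᵥ a) ≤ lev A i := by
    rw [hlevS]
    apply le_csInf hSne
    rintro t ⟨x, hx, rfl⟩
    -- weak duality with z = λ⁻¹ w
    have key : 0 ≤ ∑ j, (x j - lam⁻¹ * (A *ᵥ w) j) ^ 2 :=
      Finset.sum_nonneg fun j _ => sq_nonneg _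
    have hxAw : ∑ j, x j * (A *ᵥ w) j = w ⬝ᵥ a := by
      have h1 : x ⬝ᵥ (A *ᵥ w) = (Aᵀ *ᵥ x) ⬝ᵥ w := by
        rw [Matrix.dotProduct_mulVec, Matrix.mulVec_transpose]
      rw [show (∑ j, x j * (A *ᵥ w) j) = x ⬝ᵥ (A *ᵥ w) from rfl, h1, hx, ← ha,
        dotProduct_comm]
    have hAw_le : ∑ j, ((A *ᵥ w) j) ^ 2 ≤ lam * (w ⬝ᵥ a) := by
      rw [← hBw_sq]; exact hlow' w
    have expand : ∑ j, (x j - lam⁻¹ * (A *ᵥ w) j) ^ 2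
        = ∑ j, (x j) ^ 2 - 2 * lam⁻¹ * (w ⬝ᵥ a)
          + lam⁻¹ ^ 2 * ∑ j, ((A *ᵥ w) j) ^ 2 := by
      rw [← hxAw]
      rw [Finset.mul_sum, Finset.mul_sum, ← Finset.sum_sub_distrib, ← Finset.sum_add_distrib]
      apply Finset.sum_congr rfl
      intro j _
      ring
    have hlam_sq : lam⁻¹ ^ 2 * (lam * (w ⬝ᵥ a)) = lam⁻¹ * (w ⬝ᵥ a) := by
      field_simp
    nlinarith [sq_nonneg lam⁻¹, mul_le_mul_of_nonneg_left hAw_le (sq_nonneg lam⁻¹)]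
  have hlev_nonneg : 0 ≤ lev A i := by
    rw [hlevS]
    apply le_csInf hSne
    rintro t ⟨x, -, rfl⟩
    exact Finset.sum_nonneg fun j _ => sq_nonneg _
  -- first inequality: ofReal (lev) ≤ glev
  have first : ENNReal.ofReal (lev A i) ≤ glev B (A i) := by
    apply le_sInf
    rintro t ⟨y, hy, rfl⟩
    apply ENNReal.ofReal_le_ofReal
    -- lev ≤ u⬝a ≤ ∑ y²
    refine hlev_le.trans ?_
    have key : 0 ≤ ∑ j, (y j - (B *ᵥ u) j) ^ 2 :=
      Finset.sum_nonneg fun j _ => sq_nonneg _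
    have hyBu : ∑ j, y j * (B *ᵥ u) j = u ⬝ᵥ a := by
      have h1 : y ⬝ᵥ (B *ᵥ u) = (Bᵀ *ᵥ y) ⬝ᵥ u := by
        rw [Matrix.dotProduct_mulVec, Matrix.mulVec_transpose]
      rw [show (∑ j, y j * (B *ᵥ u) j) = y ⬝ᵥ (B *ᵥ u) from rfl, h1, hy, ← ha,
        dotProduct_comm]
    have hBu_le : ∑ j, ((B *ᵥ u) j) ^ 2 ≤ u ⬝ᵥ a := by
      rw [← hAu_sq]; exact hup' u
    have expand : ∑ j, (y j - (B *ᵥ u) j) ^ 2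
        = ∑ j, (y j) ^ 2 - 2 * (u ⬝ᵥ a) + ∑ j, ((B *ᵥ u) j) ^ 2 := by
      rw [← hyBu, Finset.mul_sum, ← Finset.sum_sub_distrib, ← Finset.sum_add_distrib]
      apply Finset.sum_congr rfl
      intro j _
      ring
    linarith
  -- second inequality
  have hmem : ENNReal.ofReal (w ⬝ᵥ a) ∈
      {t : ℝ≥0∞ | ∃ x : Fin k → ℝ, Bᵀ *ᵥ x = A i ∧ t = ENNReal.ofReal (∑ j, (x j) ^ 2)} := by
    refine ⟨B *ᵥ w, ?_, by rw [hBw_sq]⟩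
    rw [mulVec_mulVec, hw, ha]
  have second : glev B (A i) ≤ ENNReal.ofReal (lam * lev A i) := by
    refine le_trans (sInf_le hmem) (ENNReal.ofReal_le_ofReal ?_)
    have := mul_le_mul_of_nonneg_left hlev_ge hlam0.le
    calc w ⬝ᵥ a = lam * (lam⁻¹ * (w ⬝ᵥ a)) := by field_simp
      _ ≤ lam * lev A i := mul_le_mul_of_nonneg_left hlev_ge hlam0.le
  refine ⟨?_, second, ?_⟩
  · rw [lev]; exact first
  · exact ne_top_of_le_ne_top ENNReal.ofReal_ne_top second
end

section
/- Let a ∈ ℝ^d, let B be a real k×d matrix and C a real m×d matrix, and suppose BᵀB ⪯ CᵀC in the Loewner order. Then inf{‖y‖₂² : y ∈ ℝ^m, Cᵀy = a} ≤ inf{‖x‖₂² : x ∈ ℝᵏ, Bᵀx = a}, where both infima are taken in the extended nonnegative reals with inf ∅ = ∞. In particular, generalized leverage scores are monotone: if BᵀB ⪯ CᵀC then τ_i^C(A) ≤ τ_i^B(A) for every row a_i of any matrix A. -/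
open Matrix
open scoped ENNReal

open scoped RealInnerProductSpace

lemma euclid_norm_sq {n : ℕ} (u : EuclideanSpace ℝ (Fin n)) :
    ‖u‖ ^ 2 = ∑ j, (u j) ^ 2 := by
  rw [EuclideanSpace.norm_eq, Real.sq_sqrt (by positivity)]
  simp [Real.norm_eq_abs, sq_abs]

lemma key {d k m : ℕ} (a : Fin d → ℝ)
    (B : Matrix (Fin k) (Fin d) ℝ) (C : Matrix (Fin m) (Fin d) ℝ)
    (h : (Cᵀ * C - Bᵀ * B).PosSemidef)
    (x : Fin k → ℝ) (hx : Bᵀ *ᵥ x = a) :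
    ∃ y : Fin m → ℝ, Cᵀ *ᵥ y = a ∧ ∑ j, (y j) ^ 2 ≤ ∑ j, (x j) ^ 2 := by
  classical
  set Bl := Matrix.toEuclideanLin B with hBl
  set Cl := Matrix.toEuclideanLin C with hCl
  -- norm inequality
  have hnorm : ∀ v : EuclideanSpace ℝ (Fin d), ‖Bl v‖ ≤ ‖Cl v‖ := by
    intro v
    have h0 := h.dotProduct_mulVec_nonneg (WithLp.equiv 2 _ v)
    have hexp : ∀ {p : ℕ} (M : Matrix (Fin p) (Fin d) ℝ),
        (WithLp.equiv 2 _ v) ⬝ᵥ ((Mᵀ * M) *ᵥ (WithLp.equiv 2 _ v))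
          = ‖Matrix.toEuclideanLin M v‖ ^ 2 := by
      intro p M
      rw [← Matrix.mulVec_mulVec, Matrix.dotProduct_mulVec, Matrix.vecMul_transpose,
        euclid_norm_sq]
      simp [Matrix.toEuclideanLin_apply, dotProduct, sq]
    simp only [star_trivial] at h0
    rw [Matrix.sub_mulVec, dotProduct_sub, hexp B, hexp C] at h0
    have h1 : ‖Bl v‖ ^ 2 ≤ ‖Cl v‖ ^ 2 := by simpa using h0
    nlinarith [norm_nonneg (Bl v), norm_nonneg (Cl v)]
  have hker : LinearMap.ker Cl ≤ LinearMap.ker Bl := by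
    intro v hv
    simp only [LinearMap.mem_ker] at hv ⊢
    have := hnorm v
    rw [hv, norm_zero] at this
    exact norm_le_zero_iff.mp this
  set S := LinearMap.range Cl with hS
  set L : S →ₗ[ℝ] EuclideanSpace ℝ (Fin k) :=
    ((LinearMap.ker Cl).liftQ Bl hker).comp Cl.quotKerEquivRange.symm.toLinearMap with hL
  have hLval : ∀ v : EuclideanSpace ℝ (Fin d), ∀ hv : Cl v ∈ S, L ⟨Cl v, hv⟩ = Bl v := by
    intro v hv
    simp only [hL, LinearMap.coe_comp, Function.comp_apply, LinearEquiv.coe_coe]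
    rw [Cl.quotKerEquivRange_symm_apply_image v hv]
    rfl
  have hLnorm : ∀ u : S, ‖L u‖ ≤ ‖u‖ := by
    rintro ⟨_, v, rfl⟩
    rw [hLval v ⟨v, rfl⟩]
    exact (hnorm v).trans_eq rfl
  set L' := LinearMap.toContinuousLinearMap L with hL'
  have hL'norm : ‖L'‖ ≤ 1 := by
    refine ContinuousLinearMap.opNorm_le_bound _ zero_le_one fun u => ?_
    rw [one_mul]; exact hLnorm u
  set Ld := ContinuousLinearMap.adjoint L' with hLd
  set x0 : EuclideanSpace ℝ (Fin k) := (WithLp.equiv 2 _).symm x with hx0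
  set yS : S := Ld x0 with hyS
  refine ⟨WithLp.equiv 2 _ ((yS : EuclideanSpace ℝ (Fin m))), ?_, ?_⟩
  · -- Cᵀ *ᵥ y = a
    have : Matrix.toEuclideanLin Cᵀ (yS : EuclideanSpace ℝ (Fin m))
        = (WithLp.equiv 2 _).symm a := by
      apply ext_inner_right ℝ
      intro v
      have htr : (Cᵀ : Matrix (Fin d) (Fin m) ℝ) = Cᴴ :=
        (Matrix.conjTranspose_eq_transpose_of_trivial C).symm
      rw [htr, Matrix.toEuclideanLin_conjTranspose_eq_adjoint,
        LinearMap.adjoint_inner_left]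
      have h1 : ⟪(yS : EuclideanSpace ℝ (Fin m)), Cl v⟫ = ⟪yS, (⟨Cl v, ⟨v, rfl⟩⟩ : S)⟫ := rfl
      rw [h1, hyS, ContinuousLinearMap.adjoint_inner_left]
      have h2 : L' (⟨Cl v, ⟨v, rfl⟩⟩ : S) = Bl v := hLval v ⟨v, rfl⟩
      rw [h2]
      have h3 : ⟪x0, Bl v⟫ = ⟪Matrix.toEuclideanLin Bᵀ x0, v⟫ := by
        rw [show (Bᵀ : Matrix (Fin d) (Fin k) ℝ) = Bᴴ from
          (Matrix.conjTranspose_eq_transpose_of_trivial B).symm,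
          Matrix.toEuclideanLin_conjTranspose_eq_adjoint, LinearMap.adjoint_inner_left]
      rw [h3]
      refine congrFun (congrArg _ ?_) v
      rw [hx0, ← hx]; rfl
    have := congrArg (WithLp.equiv 2 (Fin d → ℝ)) this
    exact this
  · -- norm bound
    have hy2 : ∑ j, ((WithLp.equiv 2 _ (yS : EuclideanSpace ℝ (Fin m))) j) ^ 2
        = ‖(yS : EuclideanSpace ℝ (Fin m))‖ ^ 2 := (euclid_norm_sq _).symm
    have hx2 : ∑ j, (x j) ^ 2 = ‖x0‖ ^ 2 := by
      rw [euclid_norm_sq]; rfl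
    rw [hy2, hx2]
    have hyn : ‖(yS : EuclideanSpace ℝ (Fin m))‖ = ‖yS‖ := rfl
    rw [hyn]
    have : ‖yS‖ ≤ ‖x0‖ := by
      rw [hyS]
      calc ‖Ld x0‖ ≤ ‖Ld‖ * ‖x0‖ := Ld.le_opNorm x0
        _ ≤ 1 * ‖x0‖ := by
            apply mul_le_mul_of_nonneg_right _ (norm_nonneg _)
            rw [hLd]
            calc ‖ContinuousLinearMap.adjoint L'‖ = ‖L'‖ :=
                  (ContinuousLinearMap.adjoint : _ ≃ₗᵢ⋆[ℝ] _).norm_map L'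
              _ ≤ 1 := hL'norm
        _ = ‖x0‖ := one_mul _
    exact pow_le_pow_left₀ (norm_nonneg _) this 2


/-- generalized leverage scores are monotone in the Loewner order:
if `BᵀB ⪯ CᵀC` then `inf {‖y‖² : Cᵀy = a} ≤ inf {‖x‖² : Bᵀx = a}` (in `[0,∞]`). -/
theorem stmt4 {d k m : ℕ} (a : Fin d → ℝ)
    (B : Matrix (Fin k) (Fin d) ℝ) (C : Matrix (Fin m) (Fin d) ℝ)
    (h : (Cᵀ * C - Bᵀ * B).PosSemidef) :
    glev C a ≤ glev B a := by
  unfold glev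
  refine le_sInf ?_
  rintro t ⟨x, hx, rfl⟩
  obtain ⟨y, hy, hle⟩ := key a B C h x hx
  refine (sInf_le ?_).trans (ENNReal.ofReal_le_ofReal hle)
  exact ⟨y, hy, rfl⟩
end

section
/- Let A be a real n×d matrix with rows a_1,…,a_n, let S ⊆ {1,…,n}, and let i ∉ S. Let D_S denote the n×n diagonal 0–1 indicator matrix of S (so (D_S)_{jj} = 1 iff j ∈ S), and let S^{(i)} = S ∪ {i}. Then, in the extended nonnegative reals, τ_i^{D_{S^{(i)}}A}(A) = (1 + (τ_i^{D_S A}(A))⁻¹)⁻¹, where the right-hand side uses the conventions ∞⁻¹ = 0 and 0⁻¹ = ∞ (so in particular it equals 1 when τ_i^{D_S A}(A) = ∞). -/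
open Matrix
open scoped ENNReal

/-- The diagonal 0–1 indicator matrix `D_S` of a subset `S` of row indices. -/
def ind {n : ℕ} (S : Finset (Fin n)) : Matrix (Fin n) (Fin n) ℝ :=
  Matrix.diagonal (fun j => if j ∈ S then 1 else 0)

section Aux
open scoped RealInnerProductSpace

lemma sum_sq_norm' {k : ℕ} (x : EuclideanSpace ℝ (Fin k)) :
    ‖x‖ ^ 2 = ∑ j, (x j) ^ 2 := by
  rw [EuclideanSpace.norm_eq, Real.sq_sqrt (by positivity)]
  simp [Real.norm_eq_abs, sq_abs]

lemma attain' {k d : ℕ} (B : Matrix (Fin k) (Fin d) ℝ) (a : Fin d → ℝ)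
    (h : ∃ x : Fin k → ℝ, Bᵀ *ᵥ x = a) :
    ∃ x : Fin k → ℝ, Bᵀ *ᵥ x = a ∧
      ∀ y : Fin k → ℝ, Bᵀ *ᵥ y = a → ∑ j, (x j)^2 ≤ ∑ j, (y j)^2 := by
  obtain ⟨x0, hx0⟩ := h
  let L : EuclideanSpace ℝ (Fin k) →ₗ[ℝ] (Fin d → ℝ) :=
    Bᵀ.mulVecLin ∘ₗ (WithLp.linearEquiv 2 ℝ (Fin k → ℝ)).toLinearMap
  set K := LinearMap.ker L with hK
  haveI : CompleteSpace K := FiniteDimensional.complete ℝ K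
  let p : EuclideanSpace ℝ (Fin k) := (WithLp.equiv 2 (Fin k → ℝ)).symm x0
  have hLp : L p = a := hx0
  set q : EuclideanSpace ℝ (Fin k) := p - (K.orthogonalProjection p : EuclideanSpace ℝ (Fin k)) with hqdef
  have hq_mem : q ∈ Kᗮ := by rw [hqdef]; exact K.sub_starProjection_mem_orthogonal p
  have hLq : L q = a := by
    have h0 : L ((K.orthogonalProjection p : EuclideanSpace ℝ (Fin k))) = 0 :=
      (K.orthogonalProjection p).2
    rw [hqdef, map_sub, hLp, h0, sub_zero]
  refine ⟨WithLp.equiv 2 (Fin k → ℝ) q, hLq, ?_⟩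
  intro y hy
  let py : EuclideanSpace ℝ (Fin k) := (WithLp.equiv 2 (Fin k → ℝ)).symm y
  have hdiff : py - q ∈ K := by
    have : L (py - q) = 0 := by
      rw [map_sub, hLq]
      show Bᵀ *ᵥ y - a = 0
      rw [hy, sub_self]
    exact this
  have hinner : ⟪q, py - q⟫ = 0 := by
    rw [real_inner_comm]
    exact hq_mem _ hdiff
  have hpyth : ‖py‖^2 = ‖q‖^2 + ‖py - q‖^2 := by
    have := norm_add_sq_real q (py - q)
    rw [hinner] at this
    simpa using this
  have h1 : ∑ j, (q j)^2 ≤ ∑ j, (py j)^2 := by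
    rw [← sum_sq_norm', ← sum_sq_norm', hpyth]
    nlinarith [sq_nonneg ‖py - q‖]
  exact h1

lemma glev_eq_of_min' {k d : ℕ} {B : Matrix (Fin k) (Fin d) ℝ} {a : Fin d → ℝ}
    {x : Fin k → ℝ} (hx : Bᵀ *ᵥ x = a)
    (hmin : ∀ y : Fin k → ℝ, Bᵀ *ᵥ y = a → ∑ j, (x j)^2 ≤ ∑ j, (y j)^2) :
    glev B a = ENNReal.ofReal (∑ j, (x j)^2) := by
  refine le_antisymm (sInf_le ⟨x, hx, rfl⟩) (le_sInf ?_)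
  rintro t ⟨y, hy, rfl⟩
  exact ENNReal.ofReal_le_ofReal (hmin y hy)

lemma glev_eq_top' {k d : ℕ} {B : Matrix (Fin k) (Fin d) ℝ} {a : Fin d → ℝ}
    (h : ¬ ∃ x : Fin k → ℝ, Bᵀ *ᵥ x = a) : glev B a = ⊤ := by
  rw [glev, sInf_eq_top]
  rintro t ⟨x, hx, rfl⟩
  exact absurd ⟨x, hx⟩ h

lemma rhs_eq' (c : ℝ) (hc : 0 ≤ c) :
    (1 + (ENNReal.ofReal c)⁻¹)⁻¹ = ENNReal.ofReal (c / (1 + c)) := by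
  rcases eq_or_lt_of_le hc with h0 | h0
  · simp [← h0]
  · have h1 : (0:ℝ) < 1 + c := by linarith
    rw [← ENNReal.ofReal_inv_of_pos h0, ← ENNReal.ofReal_one,
      ← ENNReal.ofReal_add (by norm_num) (by positivity),
      ← ENNReal.ofReal_inv_of_pos (by positivity)]
    congr 1
    rw [show 1 + c⁻¹ = (1+c)/c by field_simp; ring, inv_div]

lemma row_formula' {n d : ℕ} (A : Matrix (Fin n) (Fin d) ℝ) (T : Finset (Fin n))
    (x : Fin n → ℝ) :
    (ind T * A)ᵀ *ᵥ x = fun c => ∑ j ∈ T, x j * A j c := by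
  funext c
  simp only [Matrix.mulVec, Matrix.transpose_apply, dotProduct, ind, Matrix.diagonal_mul,
    ite_mul, one_mul, zero_mul]
  rw [Finset.sum_ite_mem, Finset.univ_inter]
  exact Finset.sum_congr rfl (fun j _ => mul_comm _ _)

lemma sum_sq_split' {n : ℕ} (x : Fin n → ℝ) (i : Fin n) :
    ∑ j, (x j)^2 = (x i)^2 + ∑ j ∈ Finset.univ.erase i, (x j)^2 :=
  (Finset.add_sum_erase _ _ (Finset.mem_univ i)).symm

lemma sum_sq_update' {n : ℕ} (x : Fin n → ℝ) (i : Fin n) (b : ℝ) :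
    ∑ j, (Function.update x i b j)^2 = b^2 + ∑ j ∈ Finset.univ.erase i, (x j)^2 := by
  rw [sum_sq_split' _ i, Function.update_self]
  congr 1
  exact Finset.sum_congr rfl fun j hj => by
    rw [Function.update_of_ne (Finset.ne_of_mem_erase hj)]

end Aux

/-- for `i ∉ S` and `S⁽ⁱ⁾ = S ∪ {i}`, in the extended nonnegative reals,
`τᵢ^{D_{S⁽ⁱ⁾}A}(A) = (1 + (τᵢ^{D_S A}(A))⁻¹)⁻¹` (with `∞⁻¹ = 0`, `0⁻¹ = ∞`). -/
theorem stmt5 {n d : ℕ} (A : Matrix (Fin n) (Fin d) ℝ) (S : Finset (Fin n))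
    (i : Fin n) (hi : i ∉ S) :
    glev (ind (insert i S) * A) (A i) = (1 + (glev (ind S * A) (A i))⁻¹)⁻¹ := by
  classical
  by_cases hF : ∃ x : Fin n → ℝ, (ind S * A)ᵀ *ᵥ x = A i
  · -- feasible case
    obtain ⟨x1, hx1, hmin1⟩ := attain' _ _ hF
    set x0 : Fin n → ℝ := Function.update x1 i 0 with hx0def
    have hx0i : x0 i = 0 := Function.update_self i 0 x1
    have hx0 : (ind S * A)ᵀ *ᵥ x0 = A i := by
      rw [← hx1, row_formula', row_formula']
      funext e
      exact Finset.sum_congr rfl fun j hj => by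
        rw [hx0def, Function.update_of_ne (ne_of_mem_of_not_mem hj hi)]
    have hmin0 : ∀ y : Fin n → ℝ, (ind S * A)ᵀ *ᵥ y = A i →
        ∑ j, (x0 j)^2 ≤ ∑ j, (y j)^2 := by
      intro y hy
      refine le_trans ?_ (hmin1 y hy)
      rw [hx0def, sum_sq_update', sum_sq_split' x1 i]
      nlinarith [sq_nonneg (x1 i)]
    set c := ∑ j, (x0 j)^2 with hcdef
    have hc0 : 0 ≤ c := Finset.sum_nonneg fun j _ => sq_nonneg _
    have h1c : (0:ℝ) < 1 + c := by linarith
    have hw0 : ∑ j ∈ Finset.univ.erase i, (x0 j)^2 = c := by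
      rw [hcdef, sum_sq_split' x0 i, hx0i]; ring
    rw [glev_eq_of_min' hx0 hmin0, ← hcdef, rhs_eq' c hc0, glev]
    refine le_antisymm ?_ (le_sInf ?_)
    · -- upper bound via explicit z
      set z : Fin n → ℝ := Function.update ((1+c)⁻¹ • x0) i (c/(1+c)) with hzdef
      have hzfeas : (ind (insert i S) * A)ᵀ *ᵥ z = A i := by
        rw [row_formula']
        funext e
        rw [Finset.sum_insert hi]
        have h2 : ∑ j ∈ S, z j * A j e = (1+c)⁻¹ * ∑ j ∈ S, x0 j * A j e := by
          rw [Finset.mul_sum]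
          refine Finset.sum_congr rfl fun j hj => ?_
          rw [hzdef, Function.update_of_ne (ne_of_mem_of_not_mem hj hi)]
          simp [mul_assoc]
        have h3 : ∑ j ∈ S, x0 j * A j e = A i e :=
          congrFun ((row_formula' A S x0).symm.trans hx0) e
        rw [h2, h3, hzdef, Function.update_self]
        field_simp
        ring
      refine sInf_le ⟨z, hzfeas, ?_⟩
      have hcost : ∑ j, (z j)^2 = c/(1+c) := by
        rw [hzdef, sum_sq_update']
        have hterm : ∑ j ∈ Finset.univ.erase i, (((1+c)⁻¹ • x0) j)^2
             = (1+c)⁻¹^2 * ∑ j ∈ Finset.univ.erase i, (x0 j)^2 := by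
          rw [Finset.mul_sum]
          exact Finset.sum_congr rfl fun j _ => by
            simp [Pi.smul_apply, smul_eq_mul, mul_pow]
        rw [hterm, hw0]
        field_simp
        ring
      rw [hcost]
    · rintro t ⟨z, hz, rfl⟩
      apply ENNReal.ofReal_le_ofReal
      set tt := z i with httdef
      set w := ∑ j ∈ Finset.univ.erase i, (z j)^2 with hwdef
      have hw : 0 ≤ w := Finset.sum_nonneg fun j _ => sq_nonneg _
      rw [sum_sq_split' z i, ← httdef, ← hwdef]
      have hzfeas : ∀ e, tt * A i e + ∑ j ∈ S, z j * A j e = A i e := by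
        intro e
        have := congrFun ((row_formula' A (insert i S) z).symm.trans hz) e
        rwa [Finset.sum_insert hi] at this
      by_cases ht : tt = 1
      · rw [div_le_iff₀ h1c, ht]; nlinarith [hw]
      · have h1t : (1:ℝ) - tt ≠ 0 := sub_ne_zero.mpr (Ne.symm ht)
        set y : Fin n → ℝ := (1-tt)⁻¹ • Function.update z i 0 with hydef
        have hyfeas : (ind S * A)ᵀ *ᵥ y = A i := by
          rw [row_formula']; funext e
          have h4 : ∑ j ∈ S, y j * A j e = (1-tt)⁻¹ * ∑ j ∈ S, z j * A j e := by
            rw [Finset.mul_sum]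
            refine Finset.sum_congr rfl fun j hj => ?_
            rw [hydef, Pi.smul_apply, smul_eq_mul,
              Function.update_of_ne (ne_of_mem_of_not_mem hj hi), mul_assoc]
          have h5 : ∑ j ∈ S, z j * A j e = (1-tt) * A i e := by
            have := hzfeas e; linarith
          rw [h4, h5, ← mul_assoc, inv_mul_cancel₀ h1t, one_mul]
        have hcy : c ≤ ∑ j, (y j)^2 := hmin0 y hyfeas
        have hyc : ∑ j, (y j)^2 = (1-tt)⁻¹^2 * w := by
          rw [hydef]
          have hterm : ∀ j, (((1-tt)⁻¹ • Function.update z i 0) j)^2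
              = (1-tt)⁻¹^2 * (Function.update z i 0 j)^2 := fun j => by
            simp [Pi.smul_apply, smul_eq_mul, mul_pow]
          simp_rw [hterm]
          rw [← Finset.mul_sum, sum_sq_update']
          simp [hwdef]
        have hkey : c * (1-tt)^2 ≤ w := by
          rw [hyc, inv_pow] at hcy
          have h2 : (0:ℝ) < (1-tt)^2 := by positivity
          calc c * (1-tt)^2 ≤ (((1-tt)^2)⁻¹ * w) * (1-tt)^2 := by nlinarith
            _ = w := by field_simp
        rw [div_le_iff₀ h1c]
        nlinarith [sq_nonneg (tt - c*(1-tt)), hc0, hkey,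
          mul_le_mul_of_nonneg_left hkey (le_of_lt h1c)]
  · -- infeasible case
    rw [glev_eq_top' hF]
    simp only [ENNReal.inv_top, add_zero, inv_one]
    rw [glev]
    refine le_antisymm ?_ (le_sInf ?_)
    · refine sInf_le ⟨(fun j => if j = i then (1:ℝ) else 0), ?_, ?_⟩
      · rw [row_formula']; funext e
        rw [Finset.sum_insert hi, if_pos rfl]
        have hzz : ∑ j ∈ S, (if j = i then (1:ℝ) else 0) * A j e = 0 :=
          Finset.sum_eq_zero fun j hj => by
            rw [if_neg (ne_of_mem_of_not_mem hj hi), zero_mul]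
        rw [hzz, one_mul, add_zero]
      · rw [sum_sq_split' _ i, if_pos rfl]
        have hzz : ∑ j ∈ Finset.univ.erase i, ((if j = i then (1:ℝ) else 0))^2 = 0 :=
          Finset.sum_eq_zero fun j hj => by
            rw [if_neg (Finset.ne_of_mem_erase hj)]; ring
        rw [hzz]
        norm_num
    · rintro t ⟨z, hz, rfl⟩
      have hzfeas : ∀ e, z i * A i e + ∑ j ∈ S, z j * A j e = A i e := by
        intro e
        have := congrFun ((row_formula' A (insert i S) z).symm.trans hz) e
        rwa [Finset.sum_insert hi] at this
      have hzi : z i = 1 := by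
        by_contra ht
        have h1t : (1:ℝ) - z i ≠ 0 := sub_ne_zero.mpr (Ne.symm ht)
        refine hF ⟨(1 - z i)⁻¹ • z, ?_⟩
        rw [row_formula']; funext e
        have h4 : ∑ j ∈ S, ((1 - z i)⁻¹ • z) j * A j e
            = (1-z i)⁻¹ * ∑ j ∈ S, z j * A j e := by
          rw [Finset.mul_sum]
          exact Finset.sum_congr rfl fun j _ => by simp [mul_assoc]
        have h5 : ∑ j ∈ S, z j * A j e = (1 - z i) * A i e := by
          have := hzfeas e; linarith
        rw [h4, h5, ← mul_assoc, inv_mul_cancel₀ h1t, one_mul]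
      have hge : (1:ℝ) ≤ ∑ j, (z j)^2 := by
        rw [sum_sq_split' z i, hzi]
        have := Finset.sum_nonneg fun j (_ : j ∈ Finset.univ.erase i) => sq_nonneg (z j)
        nlinarith
      exact ENNReal.one_le_ofReal.mpr hge
end

section
/- Let A be a real n×d matrix with rows a_1,…,a_n and let S ⊆ {1,…,n} with diagonal 0–1 indicator matrix D_S. For each i define the estimate τ̃_i := τ_i^{D_S A}(A) if i ∈ S, and τ̃_i := (1 + (τ_i^{D_S A}(A))⁻¹)⁻¹ otherwise (extended-real arithmetic, so τ̃_i = 1 when τ_i^{D_S A}(A) = ∞). Then every estimate is an upper bound on the true leverage score: τ̃_i ≥ τ_i(A) for all i. -/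
open Matrix
open scoped ENNReal

lemma single_mem {n d : ℕ} (A : Matrix (Fin n) (Fin d) ℝ) (i : Fin n) :
    Aᵀ *ᵥ Pi.single i 1 = A i := by
  ext j; simp [Matrix.mulVec_single]

lemma lev_le {n d : ℕ} (A : Matrix (Fin n) (Fin d) ℝ) (i : Fin n) (x : Fin n → ℝ)
    (hx : Aᵀ *ᵥ x = A i) : lev A i ≤ ∑ j, (x j) ^ 2 := by
  apply csInf_le
  · exact ⟨0, by rintro t ⟨y, -, rfl⟩; positivity⟩
  · exact ⟨x, hx, rfl⟩

lemma lev_le_one {n d : ℕ} (A : Matrix (Fin n) (Fin d) ℝ) (i : Fin n) : lev A i ≤ 1 := by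
  have := lev_le A i (Pi.single i 1) (single_mem A i)
  have h : ∑ x : Fin n, ((Pi.single i 1 : Fin n → ℝ) x) ^ 2 = 1 := by
    simp [Pi.single_apply, ite_pow]
  linarith

lemma indS_mulVec {n d : ℕ} (A : Matrix (Fin n) (Fin d) ℝ) (S : Finset (Fin n))
    (x : Fin n → ℝ) :
    (ind S * A)ᵀ *ᵥ x = Aᵀ *ᵥ (fun j => if j ∈ S then x j else 0) := by
  have hd : Matrix.diagonal (fun j => if j ∈ S then (1:ℝ) else 0) *ᵥ x
      = fun j => if j ∈ S then x j else 0 := by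
    ext j; simp [Matrix.mulVec_diagonal, ite_mul]
  rw [Matrix.transpose_mul, ind, Matrix.diagonal_transpose, ← Matrix.mulVec_mulVec, hd]


/-- the uniform-sampling leverage score estimates
`τ̃ᵢ = τᵢ^{D_S A}(A)` if `i ∈ S` and `τ̃ᵢ = (1 + (τᵢ^{D_S A}(A))⁻¹)⁻¹` otherwise
are upper bounds on the true leverage scores: `τ̃ᵢ ≥ τᵢ(A)`. -/
theorem stmt6 {n d : ℕ} (A : Matrix (Fin n) (Fin d) ℝ) (S : Finset (Fin n)) (i : Fin n) :
    ENNReal.ofReal (lev A i) ≤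
      (if i ∈ S then glev (ind S * A) (A i)
       else (1 + (glev (ind S * A) (A i))⁻¹)⁻¹) := by
  split_ifs with hiS
  · -- i ∈ S
    apply le_sInf
    rintro t ⟨x, hx, rfl⟩
    apply ENNReal.ofReal_le_ofReal
    rw [indS_mulVec] at hx
    refine (lev_le A i _ hx).trans (Finset.sum_le_sum fun j _ => ?_)
    split_ifs with h
    · exact le_rfl
    · simpa using sq_nonneg (x j)
  · -- i ∉ S
    set L := ENNReal.ofReal (lev A i) with hLdef
    have hL1 : L ≤ 1 := by
      rw [← ENNReal.ofReal_one]; exact ENNReal.ofReal_le_ofReal (lev_le_one A i)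
    have hL1' : (1 : ℝ≥0∞) ≤ L⁻¹ := by
      simpa using ENNReal.inv_le_inv.2 hL1
    -- key pointwise bound
    have hkey : ∀ t ∈ {t : ℝ≥0∞ | ∃ x : Fin n → ℝ, (ind S * A)ᵀ *ᵥ x = A i ∧
        t = ENNReal.ofReal (∑ j, (x j) ^ 2)}, L ≤ (1 + t⁻¹)⁻¹ := by
      rintro t ⟨x, hx, rfl⟩
      rw [indS_mulVec] at hx
      set s : ℝ := ∑ j, (x j) ^ 2 with hs
      have hs0 : 0 ≤ s := by positivity
      set z : Fin n → ℝ := fun j => if j ∈ S then x j else 0 with hz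
      have hzi : z i = 0 := by simp [hz, hiS]
      have hzs : ∑ j, (z j) ^ 2 ≤ s := by
        refine Finset.sum_le_sum fun j _ => ?_
        simp only [hz]
        split_ifs with h
        · exact le_rfl
        · simpa using sq_nonneg (x j)
      set c : ℝ := 1 / (s + 1) with hc
      have hsc : s + 1 > 0 := by linarith
      set y : Fin n → ℝ := c • z + (1 - c) • (Pi.single i 1 : Fin n → ℝ) with hy
      have hAy : Aᵀ *ᵥ y = A i := by
        rw [hy, Matrix.mulVec_add, Matrix.mulVec_smul, Matrix.mulVec_smul, hx, single_mem]
        ext j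
        simp [smul_eq_mul]
        ring
      have hyval : ∑ j, (y j) ^ 2 ≤ s / (s + 1) := by
        have : ∑ j, (y j) ^ 2 = (∑ j, c ^ 2 * (z j) ^ 2) + (1 - c) ^ 2 := by
          rw [hy]
          have hterm : ∀ j, (c * z j + (1 - c) * (Pi.single i 1 : Fin n → ℝ) j) ^ 2
              = c ^ 2 * (z j) ^ 2 + ((1-c)^2 * ((Pi.single i 1 : Fin n → ℝ) j)^2
                + 2 * c * (1-c) * z j * (Pi.single i 1 : Fin n → ℝ) j) := by
            intro j; ring
          simp only [Pi.add_apply, Pi.smul_apply, smul_eq_mul, hterm, Finset.sum_add_distrib]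
          have hsingle2 : ∑ j : Fin n, (1 - c) ^ 2 * ((Pi.single i 1 : Fin n → ℝ) j) ^ 2
              = (1 - c) ^ 2 := by
            simp [Pi.single_apply, ite_pow, mul_ite, Finset.sum_ite_eq']
          have hcross : ∑ j : Fin n, 2 * c * (1 - c) * z j * (Pi.single i 1 : Fin n → ℝ) j
              = 0 := by
            rw [Finset.sum_eq_single i]
            · simp [hzi]
            · intro b _ hb; simp [Pi.single_apply, hb]
            · simp
          rw [hsingle2, hcross, add_zero]
        rw [this, ← Finset.mul_sum]
        have h1 : c ^ 2 * (∑ j, (z j) ^ 2) ≤ c ^ 2 * s := by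
          apply mul_le_mul_of_nonneg_left hzs (by positivity)
        have h2 : c ^ 2 * s + (1 - c) ^ 2 = s / (s + 1) := by
          rw [hc]; field_simp; ring
        linarith
      have hlev : lev A i ≤ s / (s + 1) := (lev_le A i y hAy).trans hyval
      have hL : L ≤ ENNReal.ofReal (s / (s + 1)) := ENNReal.ofReal_le_ofReal hlev
      rcases eq_or_lt_of_le hs0 with h0 | hpos
      · have h00 : L ≤ 0 := by rw [← h0] at hL; simpa using hL
        exact h00.trans zero_le
      · refine hL.trans (le_of_eq ?_)
        rw [show (1 : ℝ≥0∞) + (ENNReal.ofReal s)⁻¹ = ENNReal.ofReal (1 + s⁻¹) by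
          rw [← ENNReal.ofReal_inv_of_pos hpos, ← ENNReal.ofReal_one,
            ← ENNReal.ofReal_add zero_le_one (by positivity)],
          ← ENNReal.ofReal_inv_of_pos (by positivity : (0:ℝ) < 1 + s⁻¹)]
        congr 1
        field_simp
    -- conclude
    have hsub : (glev (ind S * A) (A i))⁻¹ ≤ L⁻¹ - 1 := by
      rw [← inv_inv (L⁻¹ - 1)]
      apply ENNReal.inv_le_inv.2
      apply le_sInf
      intro t ht
      have h1 : 1 + t⁻¹ ≤ L⁻¹ := by
        have h := ENNReal.inv_le_inv.2 (hkey t ht)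
        rwa [inv_inv] at h
      have h2 : t⁻¹ ≤ L⁻¹ - 1 := ENNReal.le_sub_of_add_le_left (by simp) h1
      calc (L⁻¹ - 1)⁻¹ ≤ (t⁻¹)⁻¹ := ENNReal.inv_le_inv.2 h2
        _ = t := inv_inv t
    calc L = (L⁻¹)⁻¹ := (inv_inv L).symm
      _ ≤ (1 + (glev (ind S * A) (A i))⁻¹)⁻¹ := by
        apply ENNReal.inv_le_inv.2
        calc 1 + (glev (ind S * A) (A i))⁻¹ ≤ 1 + (L⁻¹ - 1) := add_le_add le_rfl hsub
          _ = L⁻¹ := by rw [add_comm]; exact tsub_add_cancel_of_le hL1'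
end

section
/- Let A be a real n×d matrix with rows a_1,…,a_n and let 1 ≤ m ≤ n. For each subset S ⊆ {1,…,n} with |S| = m, with diagonal 0–1 indicator matrix D_S, define τ̃_i(S) := τ_i^{D_S A}(A) if i ∈ S and τ̃_i(S) := (1 + (τ_i^{D_S A}(A))⁻¹)⁻¹ otherwise (extended-real arithmetic). Then the average over all size-m subsets of the total estimated leverage is at most nd/m; that is, ∑_{S ⊆ {1,…,n}, |S| = m} ∑_{i=1}^n τ̃_i(S) ≤ C(n,m) · (n·d)/m, where C(n,m) is the binomial coefficient. -/
open Matrix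
open scoped ENNReal

/-- The leverage score estimate for row `i` obtained from the uniform sample `S`. -/
noncomputable def tautilde {n d : ℕ} (A : Matrix (Fin n) (Fin d) ℝ)
    (S : Finset (Fin n)) (i : Fin n) : ℝ≥0∞ :=
  if i ∈ S then glev (ind S * A) (A i)
  else (1 + (glev (ind S * A) (A i))⁻¹)⁻¹

lemma ind_mul_apply {n d : ℕ} (A : Matrix (Fin n) (Fin d) ℝ) (S : Finset (Fin n)) (j : Fin n) :
    (ind S * A) j = if j ∈ S then A j else 0 := by
  funext l
  show (ind S * A) j l = _
  rw [ind, Matrix.diagonal_mul]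
  by_cases h : j ∈ S <;> simp [h]

lemma ind_insert {n d : ℕ} (A : Matrix (Fin n) (Fin d) ℝ) (S : Finset (Fin n))
    (i : Fin n) (hi : i ∉ S) :
    (ind S * A).updateRow i (A i) = ind (insert i S) * A := by
  funext j l
  by_cases h : j = i
  · subst h
    rw [Matrix.updateRow_self]
    have := congrFun (ind_mul_apply A (insert j S) j) l
    rw [this, if_pos (Finset.mem_insert_self j S)]
  · rw [Matrix.updateRow_ne h]
    have h1 := congrFun (ind_mul_apply A S j) l
    have h2 := congrFun (ind_mul_apply A (insert i S) j) l
    rw [h1, h2]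
    have : j ∈ insert i S ↔ j ∈ S := by
      rw [Finset.mem_insert]
      exact or_iff_right h
    by_cases hj : j ∈ S
    · rw [if_pos hj, if_pos (this.mpr hj)]
    · rw [if_neg hj, if_neg (fun hh => hj (this.mp hh))]

lemma glev_le {k d : ℕ} {B : Matrix (Fin k) (Fin d) ℝ} {a : Fin d → ℝ} {x : Fin k → ℝ}
    (h : Bᵀ *ᵥ x = a) : glev B a ≤ ENNReal.ofReal (∑ j, (x j) ^ 2) :=
  sInf_le ⟨x, h, rfl⟩


lemma sum_glev_self_le {k d : ℕ} (B : Matrix (Fin k) (Fin d) ℝ) :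
    ∑ i, glev B (B i) ≤ (d : ℝ≥0∞) := by
  classical
  set E := EuclideanSpace ℝ (Fin k)
  set f : E →ₗ[ℝ] EuclideanSpace ℝ (Fin d) := Matrix.toEuclideanLin Bᵀ with hf
  set W : Submodule ℝ E := (LinearMap.ker f)ᗮ with hW
  set P := fun x : E => (W.orthogonalProjection x : E) with hP
  have hker : ∀ x : E, f (P x) = f x := by
    intro x
    have h1 : x - P x ∈ Wᗮ := Submodule.sub_starProjection_mem_orthogonal (K := W) x
    rw [hW, Submodule.orthogonal_orthogonal] at h1
    have h2 : f (x - P x) = 0 := h1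
    rw [map_sub, sub_eq_zero] at h2
    exact h2.symm
  -- single vectors
  set e : Fin k → E := fun i => EuclideanSpace.single i 1 with he
  have hfe : ∀ i, f (e i) = (WithLp.equiv 2 (Fin d → ℝ)).symm (B i) := by
    intro i
    rw [hf, Matrix.toEuclideanLin_apply]
    congr 1
    ext j
    show (Bᵀ *ᵥ (WithLp.equiv 2 (Fin k → ℝ) (e i))) j = B i j
    have : (WithLp.equiv 2 (Fin k → ℝ) (e i)) = Pi.single i 1 := rfl
    rw [this, Matrix.mulVec_single]; simp
  -- each glev bounded by squared norm of projected basis vector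
  have key : ∀ i, glev B (B i) ≤ ENNReal.ofReal (‖P (e i)‖ ^ 2) := by
    intro i
    have hx : Bᵀ *ᵥ (WithLp.equiv 2 (Fin k → ℝ) (P (e i))) = B i := by
      have := hker (e i)
      rw [hfe i, hf, Matrix.toEuclideanLin_apply] at this
      have := congrArg (WithLp.equiv 2 (Fin d → ℝ)) this
      simpa using this
    have hnorm : ‖P (e i)‖ ^ 2 = ∑ j, ((WithLp.equiv 2 (Fin k → ℝ) (P (e i))) j) ^ 2 := by
      rw [EuclideanSpace.norm_eq, Real.sq_sqrt (by positivity)]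
      simp [sq_abs]
    rw [hnorm]
    exact glev_le hx
  calc ∑ i, glev B (B i) ≤ ∑ i, ENNReal.ofReal (‖P (e i)‖ ^ 2) :=
        Finset.sum_le_sum fun i _ => key i
    _ = ENNReal.ofReal (∑ i, ‖P (e i)‖ ^ 2) := by
        rw [ENNReal.ofReal_sum_of_nonneg (fun i _ => by positivity)]
    _ ≤ (d : ℝ≥0∞) := by
        have hfd : FiniteDimensional ℝ W := inferInstance
        set r := Module.finrank ℝ W with hr
        set v := stdOrthonormalBasis ℝ W with hv
        have hnormi : ∀ i, ‖P (e i)‖ ^ 2 = ∑ j, (inner ℝ ((v j : E)) (e i) : ℝ) ^ 2 := by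
          intro i
          have h1 : ‖P (e i)‖ = ‖(W.orthogonalProjection (e i) : W)‖ := rfl
          rw [h1, ← v.repr.norm_map, EuclideanSpace.norm_eq,
            Real.sq_sqrt (by positivity)]
          refine Finset.sum_congr rfl fun j _ => ?_
          rw [Real.norm_eq_abs, sq_abs, v.repr_apply_apply]
          congr 1
          exact Submodule.inner_orthogonalProjection_eq_of_mem_left (K := W) (v j) (e i)
        have hswap : ∑ i, ‖P (e i)‖ ^ 2 = (r : ℝ) := by
          simp_rw [hnormi]
          rw [Finset.sum_comm]
          have : ∀ j, ∑ i, (inner ℝ ((v j : E)) (e i) : ℝ) ^ 2 = 1 := by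
            intro j
            have : ∀ i, (inner ℝ ((v j : E)) (e i) : ℝ) = (v j : E) i := by
              intro i
              rw [he]
              rw [real_inner_comm]
              rw [EuclideanSpace.inner_single_left]
              simp
            simp_rw [this]
            have hn : ∑ i, ((v j : E) i) ^ 2 = ‖(v j : E)‖ ^ 2 := by
              rw [EuclideanSpace.norm_eq, Real.sq_sqrt (by positivity)]
              simp [sq_abs]
            rw [hn]
            have : ‖(v j : E)‖ = 1 := by
              rw [Submodule.norm_coe]
              exact v.orthonormal.1 j
            rw [this]; norm_num
          simp_rw [this]
          simp [hr]
        rw [hswap]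
        have hrle : r ≤ d := by
          have hE : Module.finrank ℝ E = k := finrank_euclideanSpace_fin
          have hD : Module.finrank ℝ (EuclideanSpace ℝ (Fin d)) = d := finrank_euclideanSpace_fin
          have h1 : Module.finrank ℝ (LinearMap.ker f) + r = k := by
            have := Submodule.finrank_add_finrank_orthogonal (K := LinearMap.ker f)
            rw [hE] at this
            exact this
          have h2 : Module.finrank ℝ (LinearMap.range f) + Module.finrank ℝ (LinearMap.ker f) = k := by
            have := LinearMap.finrank_range_add_finrank_ker f
            rw [hE] at this
            exact this
          have h3 : Module.finrank ℝ (LinearMap.range f) ≤ d := by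
            have := Submodule.finrank_le (LinearMap.range f)
            rw [hD] at this
            exact this
          omega
        rw [ENNReal.ofReal_natCast]
        exact_mod_cast Nat.cast_le.mpr hrle

lemma le_glev_updateRow {k d : ℕ} (B : Matrix (Fin k) (Fin d) ℝ) (i : Fin k)
    (a : Fin d → ℝ) (hB : B i = 0) :
    (1 + (glev B a)⁻¹)⁻¹ ≤ glev (B.updateRow i a) a := by
  classical
  refine le_sInf ?_
  rintro t ⟨x', hx', rfl⟩
  set c := x' i with hc
  set s := ∑ j, (x' j) ^ 2 with hs
  have hcs : c ^ 2 ≤ s :=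
    Finset.single_le_sum (f := fun j => (x' j) ^ 2) (fun j _ => sq_nonneg _)
      (Finset.mem_univ i)
  have hs0 : 0 ≤ s := Finset.sum_nonneg fun j _ => sq_nonneg _
  -- Bᵀ *ᵥ x' = (1 - c) • a
  have hBx : Bᵀ *ᵥ x' = (1 - c) • a := by
    funext j
    have h1 : ((B.updateRow i a)ᵀ *ᵥ x') j = (Bᵀ *ᵥ x') j + c * a j := by
      simp only [Matrix.mulVec, dotProduct, Matrix.transpose_apply]
      rw [← Finset.sum_erase_add _ _ (Finset.mem_univ i),
        ← Finset.sum_erase_add _ (fun l => B l j * x' l) (Finset.mem_univ i)]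
      have : ∀ l ∈ Finset.univ.erase i, B.updateRow i a l j * x' l = B l j * x' l := by
        intro l hl
        rw [Matrix.updateRow_ne (Finset.ne_of_mem_erase hl)]
      rw [Finset.sum_congr rfl this, Matrix.updateRow_self]
      have hBij : B i j = 0 := by rw [hB]; rfl
      rw [hBij]
      ring
    have h2 := congrFun hx' j
    rw [h1] at h2
    have : (Bᵀ *ᵥ x') j = a j - c * a j := by linarith
    rw [this]
    simp [smul_eq_mul]
    ring
  by_cases hc1 : c = 1
  · -- cost at least c² = 1, and LHS ≤ 1
    have h1 : (1 + (glev B a)⁻¹)⁻¹ ≤ 1 := by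
      rw [ENNReal.inv_le_one]
      exact le_self_add
    refine h1.trans ?_
    rw [← ENNReal.ofReal_one]
    apply ENNReal.ofReal_le_ofReal
    nlinarith [hcs]
  · -- rescaled witness for B
    have h1c : (1 : ℝ) - c ≠ 0 := sub_ne_zero.mpr (Ne.symm hc1)
    set u : ℝ := (s - c ^ 2) / (1 - c) ^ 2 with hu
    have hu0 : 0 ≤ u := div_nonneg (by linarith) (sq_nonneg _)
    have huc : u * (1 - c) ^ 2 = s - c ^ 2 := by
      rw [hu, div_mul_cancel₀ _ (pow_ne_zero 2 h1c)]
    -- feasible x for B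
    set x : Fin k → ℝ := fun l => (1 - c)⁻¹ * (x' l - Pi.single (M := fun _ : Fin k => ℝ) i c l) with hxdef
    have hfeas : Bᵀ *ᵥ x = a := by
      funext j
      have hsingle : (Bᵀ *ᵥ (fun l => Pi.single (M := fun _ : Fin k => ℝ) i c l)) j = 0 := by
        simp only [Matrix.mulVec, dotProduct, Matrix.transpose_apply]
        rw [Finset.sum_eq_single i]
        · rw [hB]; simp
        · intro l _ hl; rw [Pi.single_eq_of_ne hl]; ring
        · intro h; exact absurd (Finset.mem_univ i) h
      have : (Bᵀ *ᵥ x) j = (1 - c)⁻¹ * ((Bᵀ *ᵥ x') j - (Bᵀ *ᵥ (fun l => Pi.single (M := fun _ : Fin k => ℝ) i c l)) j) := by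
        simp only [Matrix.mulVec, dotProduct, Matrix.transpose_apply, hxdef]
        rw [← Finset.sum_sub_distrib, Finset.mul_sum]
        apply Finset.sum_congr rfl
        intro l _
        ring
      rw [this, hsingle, hBx]
      show (1 - c)⁻¹ * ((1 - c) * a j - 0) = a j
      rw [sub_zero, inv_mul_cancel_left₀ h1c]
    have htau : glev B a ≤ ENNReal.ofReal u := by
      have hxsum : ∑ l, (x l) ^ 2 = u := by
        have h1 : ∑ l, (x l) ^ 2
            = (1-c)⁻¹^2 * ∑ l, (x' l - Pi.single (M := fun _ : Fin k => ℝ) i c l)^2 := by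
          rw [Finset.mul_sum]
          apply Finset.sum_congr rfl
          intro l _
          rw [hxdef]
          ring
        have h2 : ∑ l, (x' l - Pi.single (M := fun _ : Fin k => ℝ) i c l)^2 = s - c^2 := by
          rw [← Finset.sum_erase_add _ _ (Finset.mem_univ i), hs,
            ← Finset.sum_erase_add _ (fun l => x' l ^ 2) (Finset.mem_univ i)]
          have : ∀ l ∈ Finset.univ.erase i,
              (x' l - Pi.single (M := fun _ : Fin k => ℝ) i c l)^2 = x' l ^ 2 := by
            intro l hl
            rw [Pi.single_eq_of_ne (Finset.ne_of_mem_erase hl)]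
            ring
          rw [Finset.sum_congr rfl this, Pi.single_eq_same]
          ring
        rw [h1, h2, hu]
        field_simp
      rw [← hxsum]
      exact glev_le hfeas
    have hmono : (1 + (glev B a)⁻¹)⁻¹ ≤ (1 + (ENNReal.ofReal u)⁻¹)⁻¹ := by
      apply ENNReal.inv_le_inv.mpr
      exact add_le_add le_rfl (ENNReal.inv_le_inv.mpr htau)
    refine hmono.trans ?_
    by_cases hu0' : u = 0
    · simp [hu0']
    · have hupos : 0 < u := lt_of_le_of_ne hu0 (Ne.symm hu0')
      rw [← ENNReal.ofReal_inv_of_pos hupos, ← ENNReal.ofReal_one,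
        ← ENNReal.ofReal_add (by norm_num) (by positivity),
        ← ENNReal.ofReal_inv_of_pos (by positivity)]
      apply ENNReal.ofReal_le_ofReal
      have hkey : (1 + u⁻¹)⁻¹ = u / (1 + u) := by
        field_simp
        exact add_comm 1 u
      rw [hkey, div_le_iff₀ (by positivity)]
      have hpos : (0:ℝ) < (1-c)^2 := by positivity
      have h4 : s * (u * (1-c)^2) = s * (s - c^2) := by rw [huc]
      nlinarith [h4, huc, sq_nonneg (s - c), hpos]

lemma sum_mem_glev_le {n d : ℕ} (A : Matrix (Fin n) (Fin d) ℝ) (S : Finset (Fin n)) :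
    ∑ i ∈ S, glev (ind S * A) (A i) ≤ (d : ℝ≥0∞) := by
  calc ∑ i ∈ S, glev (ind S * A) (A i)
      = ∑ i ∈ S, glev (ind S * A) ((ind S * A) i) := by
        apply Finset.sum_congr rfl
        intro i hi
        rw [ind_mul_apply, if_pos hi]
    _ ≤ ∑ i, glev (ind S * A) ((ind S * A) i) :=
        Finset.sum_le_sum_of_subset (Finset.subset_univ S)
    _ ≤ (d : ℝ≥0∞) := sum_glev_self_le _

lemma reindex_sum {n : ℕ} (m : ℕ) (F : Finset (Fin n) → Fin n → ℝ≥0∞) :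
    ∑ S ∈ Finset.univ.powersetCard m, ∑ i ∈ Sᶜ, F (insert i S) i
      = ∑ T ∈ Finset.univ.powersetCard (m+1), ∑ i ∈ T, F T i := by
  classical
  rw [Finset.sum_sigma', Finset.sum_sigma']
  refine Finset.sum_bij' (fun p _ => ⟨insert p.2 p.1, p.2⟩)
    (fun p _ => ⟨p.1.erase p.2, p.2⟩) ?_ ?_ ?_ ?_ ?_
  · rintro ⟨S, i⟩ hp
    rw [Finset.mem_sigma] at hp ⊢
    obtain ⟨hS, hi⟩ := hp
    rw [Finset.mem_powersetCard_univ] at hS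
    have hiS : i ∉ S := Finset.mem_compl.mp hi
    constructor
    · rw [Finset.mem_powersetCard_univ, Finset.card_insert_of_notMem hiS, hS]
    · exact Finset.mem_insert_self i S
  · rintro ⟨T, i⟩ hp
    rw [Finset.mem_sigma] at hp ⊢
    obtain ⟨hT, hi⟩ := hp
    rw [Finset.mem_powersetCard_univ] at hT
    constructor
    · rw [Finset.mem_powersetCard_univ, Finset.card_erase_of_mem hi, hT]
      omega
    · exact Finset.mem_compl.mpr (Finset.notMem_erase i T)
  · rintro ⟨S, i⟩ hp
    rw [Finset.mem_sigma] at hp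
    have hiS : i ∉ S := Finset.mem_compl.mp hp.2
    simp [Finset.erase_insert hiS]
  · rintro ⟨T, i⟩ hp
    rw [Finset.mem_sigma] at hp
    simp [Finset.insert_erase hp.2]
  · rintro ⟨S, i⟩ _
    rfl

lemma choose_arith {n m d : ℕ} (hm : 1 ≤ m) :
    ((n.choose m : ℝ≥0∞) * d + (n.choose (m+1) : ℝ≥0∞) * d)
      ≤ (n.choose m : ℝ≥0∞) * ((n : ℝ≥0∞) * (d : ℝ≥0∞)) / (m : ℝ≥0∞) := by
  rw [ENNReal.le_div_iff_mul_le (Or.inl (by exact_mod_cast Nat.one_le_iff_ne_zero.mp hm))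
    (Or.inl (ENNReal.natCast_ne_top m))]
  have hnat : (n.choose m * d + n.choose (m+1) * d) * m ≤ n.choose m * (n * d) := by
    have e1 : (n+1).choose (m+1) = n.choose m + n.choose (m+1) := Nat.choose_succ_succ n m
    have e2 : (n+1).choose (m+1) * (m+1) = (n+1) * n.choose m :=
      (Nat.add_one_mul_choose_eq n m).symm
    rw [Nat.mul_succ, Nat.succ_mul] at e2
    have e3 : n.choose m ≤ (n+1).choose (m+1) := by
      rw [e1]; exact Nat.le_add_right _ _
    have h : (n.choose m + n.choose (m+1)) * m ≤ n.choose m * n := by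
      have h4 : (n.choose m + n.choose (m+1)) * m = (n+1).choose (m+1) * m := by rw [← e1]
      rw [h4, Nat.mul_comm (n.choose m) n]
      omega
    calc (n.choose m * d + n.choose (m+1) * d) * m
        = ((n.choose m + n.choose (m+1)) * m) * d := by ring
      _ ≤ (n.choose m * n) * d := Nat.mul_le_mul_right d h
      _ = n.choose m * (n * d) := by ring
  exact_mod_cast hnat


/-- averaged over all size-`m` subsets `S` of the rows, the total
estimated leverage `∑ᵢ τ̃ᵢ(S)` is at most `nd/m`; equivalently
`∑_{|S| = m} ∑ᵢ τ̃ᵢ(S) ≤ C(n,m)·nd/m`. -/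
theorem stmt7 {n d : ℕ} (A : Matrix (Fin n) (Fin d) ℝ) (m : ℕ)
    (hm : 1 ≤ m) (hmn : m ≤ n) :
    ∑ S ∈ Finset.univ.powersetCard m, ∑ i : Fin n, tautilde A S i ≤
      (n.choose m : ℝ≥0∞) * ((n : ℝ≥0∞) * (d : ℝ≥0∞)) / (m : ℝ≥0∞) := by
  classical
  have hsplit : ∀ S : Finset (Fin n), ∑ i : Fin n, tautilde A S i
      = ∑ i ∈ S, glev (ind S * A) (A i)
        + ∑ i ∈ Sᶜ, (1 + (glev (ind S * A) (A i))⁻¹)⁻¹ := by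
    intro S
    rw [← Finset.sum_add_sum_compl S]
    congr 1
    · exact Finset.sum_congr rfl fun i hi => by rw [tautilde, if_pos hi]
    · exact Finset.sum_congr rfl fun i hi => by
        rw [tautilde, if_neg (Finset.mem_compl.mp hi)]
  calc ∑ S ∈ Finset.univ.powersetCard m, ∑ i : Fin n, tautilde A S i
      = ∑ S ∈ Finset.univ.powersetCard m, (∑ i ∈ S, glev (ind S * A) (A i)
          + ∑ i ∈ Sᶜ, (1 + (glev (ind S * A) (A i))⁻¹)⁻¹) :=
        Finset.sum_congr rfl fun S _ => hsplit S
    _ = (∑ S ∈ Finset.univ.powersetCard m, ∑ i ∈ S, glev (ind S * A) (A i))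
          + ∑ S ∈ Finset.univ.powersetCard m,
              ∑ i ∈ Sᶜ, (1 + (glev (ind S * A) (A i))⁻¹)⁻¹ :=
        Finset.sum_add_distrib
    _ ≤ (n.choose m : ℝ≥0∞) * d + (n.choose (m+1) : ℝ≥0∞) * d := by
        gcongr with S hS
        · calc ∑ S ∈ Finset.univ.powersetCard m, ∑ i ∈ S, glev (ind S * A) (A i)
              ≤ ∑ _S ∈ Finset.univ.powersetCard m, (d : ℝ≥0∞) :=
                Finset.sum_le_sum fun S _ => sum_mem_glev_le A S
            _ = (n.choose m : ℝ≥0∞) * d := by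
                rw [Finset.sum_const, Finset.card_powersetCard, Finset.card_univ,
                  Fintype.card_fin, nsmul_eq_mul]
        · calc ∑ S ∈ Finset.univ.powersetCard m,
                ∑ i ∈ Sᶜ, (1 + (glev (ind S * A) (A i))⁻¹)⁻¹
              ≤ ∑ S ∈ Finset.univ.powersetCard m,
                ∑ i ∈ Sᶜ, glev (ind (insert i S) * A) (A i) := by
                refine Finset.sum_le_sum fun S _ => Finset.sum_le_sum fun i hi => ?_
                have hiS : i ∉ S := Finset.mem_compl.mp hi
                have hrow : (ind S * A) i = 0 := by
                  rw [ind_mul_apply, if_neg hiS]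
                have h := le_glev_updateRow (ind S * A) i (A i) hrow
                rwa [ind_insert A S i hiS] at h
            _ = ∑ T ∈ Finset.univ.powersetCard (m+1),
                ∑ i ∈ T, glev (ind T * A) (A i) :=
                reindex_sum m (fun T i => glev (ind T * A) (A i))
            _ ≤ ∑ _T ∈ Finset.univ.powersetCard (m+1), (d : ℝ≥0∞) :=
                Finset.sum_le_sum fun T _ => sum_mem_glev_le A T
            _ = (n.choose (m+1) : ℝ≥0∞) * d := by
                rw [Finset.sum_const, Finset.card_powersetCard, Finset.card_univ,
                  Fintype.card_fin, nsmul_eq_mul]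
    _ ≤ (n.choose m : ℝ≥0∞) * ((n : ℝ≥0∞) * (d : ℝ≥0∞)) / (m : ℝ≥0∞) :=
        choose_arith hm
end
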